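/- A language L ⊆ WM(A) is a VPL if and only if its topological closure in the completion of WM(A) is clopen; moreover the maps L ↦ closure(L) and K ↦ K ∩ WM(A) are mutually inverse Boolean algebra isomorphisms between the Boolean algebra of VPLs over A and the Boolean algebra of clopen subsets of the completion. -/

import Mathlib

inductive VPKind : Type
  | call | ret | intern
deriving DecidableEq

class VPAlphabet (A : Type) where
  kind : A → VPKind

variable {A : Type} [VPAlphabet A]

inductive WellMatched : List A → Prop
  | nil : WellMatched []
  | intern (c : A) (hc : VPAlphabet.kind c = VPKind.intern) : WellMatched [c]
  | ext (a b : A) (w : List A) (ha : VPAlphabet.kind a = VPKind.call)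
      (hb : VPAlphabet.kind b = VPKind.ret) (hw : WellMatched w) :
      WellMatched (a :: w ++ [b])
  | append (u v : List A) (hu : WellMatched u) (hv : WellMatched v) : WellMatched (u ++ v)

theorem wm_insert {u v x : List A} (h : WellMatched (u ++ v)) (hx : WellMatched x) :
    WellMatched (u ++ x ++ v) := by
  suffices H : ∀ w, WellMatched w → ∀ u' v' : List A, w = u' ++ v' →
      WellMatched (u' ++ x ++ v') from H _ h u v rfl
  intro w hw
  induction hw with
  | nil =>
    intro u' v' huv
    obtain ⟨rfl, rfl⟩ := List.append_eq_nil_iff.mp huv.symm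
    simpa using hx
  | intern c hc =>
    intro u' v' huv
    rcases u' with _ | ⟨a, u''⟩
    · simp only [List.nil_append] at huv
      subst huv
      simpa using WellMatched.append x [c] hx (WellMatched.intern c hc)
    · have h1 : c = a := by injection huv
      have h2 : ([] : List A) = u'' ++ v' := by injection huv
      obtain ⟨rfl, rfl⟩ := List.append_eq_nil_iff.mp h2.symm
      subst h1
      simpa using WellMatched.append [c] x (WellMatched.intern c hc) hx
  | ext a b w' ha hb hw' ih =>
    intro u' v' huv
    rcases u' with _ | ⟨a'', u''⟩
    · simp only [List.nil_append] at huv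
      subst huv
      simpa using WellMatched.append x _ hx (WellMatched.ext a b w' ha hb hw')
    · have h1 : a = a'' := by injection huv
      have huv2 : w' ++ [b] = u'' ++ v' := by injection huv
      subst h1
      rcases List.eq_nil_or_concat v' with rfl | ⟨v'', b'', rfl⟩
      · have h3 : u'' = w' ++ [b] := by simpa using huv2.symm
        subst h3
        simpa using WellMatched.append _ x (WellMatched.ext a b w' ha hb hw') hx
      · have h4 : w' = u'' ++ v'' ∧ [b] = [b''] :=
          List.append_inj' (by simpa [List.append_assoc] using huv2) rfl
        obtain ⟨rfl, hb'⟩ := h4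
        have hbb : b = b'' := by injection hb'
        subst hbb
        have := WellMatched.ext a b _ ha hb (ih u'' v'' rfl)
        simpa [List.append_assoc] using this
  | append w₁ w₂ h₁ h₂ ih₁ ih₂ =>
    intro u' v' huv
    rcases List.append_eq_append_iff.mp huv with ⟨a', rfl, rfl⟩ | ⟨c', rfl, rfl⟩
    · have := WellMatched.append _ _ h₁ (ih₂ a' v' rfl)
      simpa [List.append_assoc] using this
    · have := WellMatched.append _ _ (ih₁ u' c' rfl) h₂
      simpa [List.append_assoc] using this

def WM (A : Type) [VPAlphabet A] : Type := {w : List A // WellMatched w}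

instance : Monoid (WM A) where
  one := ⟨[], WellMatched.nil⟩
  mul u v := ⟨u.1 ++ v.1, WellMatched.append _ _ u.2 v.2⟩
  mul_assoc a b c := Subtype.ext (List.append_assoc _ _ _)
  one_mul a := Subtype.ext (List.nil_append _)
  mul_one a := Subtype.ext (List.append_nil _)

@[simp] theorem WM.mul_val (x y : WM A) : (x * y).1 = x.1 ++ y.1 := rfl
@[simp] theorem WM.one_val : (1 : WM A).1 = [] := rfl

instance : Nonempty (WM A) := ⟨1⟩

def extWord (u v : List A) (h : WellMatched (u ++ v)) (x : WM A) : WM A :=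
  ⟨u ++ x.1 ++ v, wm_insert h x.2⟩

@[simp] theorem extWord_val (u v : List A) (h : WellMatched (u ++ v)) (x : WM A) :
    (extWord u v h x).1 = u ++ x.1 ++ v := rfl

structure ExtAlgebra (R : Type*) [Monoid R] where
  O : Submonoid (Function.End R)
  mulLeft_mem : ∀ r : R, (fun x => r * x) ∈ O
  mulRight_mem : ∀ r : R, (fun x => x * r) ∈ O

structure ExtAlgHom {R S : Type*} [Monoid R] [Monoid S]
    (ER : ExtAlgebra R) (ES : ExtAlgebra S) where
  toMonoidHom : R →* S
  opMap : ER.O →* ES.O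
  compat : ∀ (e : ER.O) (r : R),
    (opMap e : Function.End S) (toMonoidHom r) = toMonoidHom ((e : Function.End R) r)

/-- A morphism of `Ext`-algebras from the free `Ext`-algebra of well-matched words
into an `Ext`-algebra `R`, given by its monoid part and by the images of the
operations `ext_{u,v}`. -/
structure ExtHomWM (A : Type) [VPAlphabet A] {R : Type*} [Monoid R] (ER : ExtAlgebra R) where
  toMonoidHom : WM A →* R
  op : ∀ u v : List A, WellMatched (u ++ v) → ER.O
  op_one : op [] [] WellMatched.nil = 1
  op_comp : ∀ u v (h : WellMatched (u ++ v)) u' v' (h' : WellMatched (u' ++ v'))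
      (h'' : WellMatched ((u ++ u') ++ (v' ++ v))),
      op (u ++ u') (v' ++ v) h'' = op u v h * op u' v' h'
  op_spec : ∀ u v (h : WellMatched (u ++ v)) (x : WM A),
      (op u v h : Function.End R) (toMonoidHom x) = toMonoidHom (extWord u v h x)

/-- `R` recognises `L` via the morphism `φ` when `L` is the preimage of its image. -/
def Recognises {R : Type*} [Monoid R] {ER : ExtAlgebra R}
    (φ : ExtHomWM A ER) (L : Set (WM A)) : Prop :=
  L = φ.toMonoidHom ⁻¹' (φ.toMonoidHom '' L)

/-- The free `Ext`-algebra structure on the monoid of well-matched words. -/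
def freeExt (A : Type) [VPAlphabet A] : ExtAlgebra (WM A) where
  O :=
    { carrier := {e | ∃ u v, ∃ h : WellMatched (u ++ v), ∀ x : WM A, e x = extWord u v h x}
      one_mem' := ⟨[], [], WellMatched.nil, fun x => Subtype.ext (by show x.1 = [] ++ x.1 ++ []; simp)⟩
      mul_mem' := by
        rintro e f ⟨u, v, h, he⟩ ⟨u', v', h', hf⟩
        have h'' : WellMatched ((u ++ u') ++ (v' ++ v)) := by
          simpa [List.append_assoc] using wm_insert h h'
        exact ⟨u ++ u', v' ++ v, h'', fun x => by
          rw [show (e * f) x = e (f x) from rfl, hf, he]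
          exact Subtype.ext (by simp [List.append_assoc])⟩ }
  mulLeft_mem r := ⟨r.1, [], by simpa using r.2, fun x => Subtype.ext (by simp)⟩
  mulRight_mem r := ⟨[], r.1, by simpa using r.2, fun x => Subtype.ext (by simp)⟩

/-- A sub-`Ext`-algebra of an `Ext`-algebra. -/
structure SubExt {S : Type*} [Monoid S] (ES : ExtAlgebra S) where
  carrier : Submonoid S
  ops : Submonoid (Function.End S)
  ops_le : ops ≤ ES.O
  maps_to : ∀ e ∈ ops, ∀ x ∈ carrier, e x ∈ carrier
  mulLeft_mem : ∀ r ∈ carrier, (fun x => r * x) ∈ ops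
  mulRight_mem : ∀ r ∈ carrier, (fun x => x * r) ∈ ops

/-- The `Ext`-algebra structure induced on a sub-`Ext`-algebra. -/
def SubExt.toExtAlgebra {S : Type*} [Monoid S] {ES : ExtAlgebra S} (T : SubExt ES) :
    ExtAlgebra T.carrier where
  O :=
    { carrier := {e : Function.End T.carrier | ∃ f ∈ T.ops, ∀ x : T.carrier, (e x : S) = f x}
      one_mem' := ⟨1, T.ops.one_mem, fun _ => rfl⟩
      mul_mem' := by
        rintro e e' ⟨f, hf, he⟩ ⟨f', hf', he'⟩
        exact ⟨f * f', mul_mem hf hf', fun x => by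
          rw [show (e * e') x = e (e' x) from rfl, show (f * f') (x : S) = f (f' x) from rfl,
            ← he', he]⟩ }
  mulLeft_mem r := ⟨fun x => (r : S) * x, T.mulLeft_mem r r.2, fun _ => rfl⟩
  mulRight_mem r := ⟨fun x => x * (r : S), T.mulRight_mem r r.2, fun _ => rfl⟩

/-- `ER` is a quotient of `ES` if there is a surjective morphism of `Ext`-algebras
from `ES` onto `ER`. -/
def IsQuotientOf {R S : Type*} [Monoid R] [Monoid S]
    (ER : ExtAlgebra R) (ES : ExtAlgebra S) : Prop :=
  ∃ h : ExtAlgHom ES ER, Function.Surjective h.toMonoidHom ∧ Function.Surjective h.opMap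

/-- Bundled finite `Ext`-algebras. -/
structure BExt : Type 1 where
  carrier : Type
  [mon : Monoid carrier]
  [fin : Finite carrier]
  ext : ExtAlgebra carrier

attribute [instance] BExt.mon BExt.fin

section ListTake

variable {B : Type*}

theorem take_take_append (N k : ℕ) (hk : k ≤ N) (x v : List B) :
    ((x.take N) ++ v).take k = (x ++ v).take k := by
  rw [List.take_append, List.take_append, List.take_take,
    List.length_take]
  rw [min_eq_left hk]
  congr 2
  omega

theorem take_mid (N : ℕ) (u s v : List B) :
    (u ++ s.take N ++ v).take N = (u ++ s ++ v).take N := by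
  conv_lhs => rw [List.append_assoc, List.take_append]
  conv_rhs => rw [List.append_assoc, List.take_append]
  congr 1
  exact take_take_append N _ (Nat.sub_le _ _) s v

theorem take_append_right (N : ℕ) (u s : List B) :
    (u ++ s.take N).take N = (u ++ s).take N := by
  have := take_mid N u s ([] : List B)
  simpa using this

end ListTake

/-- The monoid of words of length at most `N`, with truncated concatenation. -/
def TruncM (B : Type) (N : ℕ) : Type := {l : List B // l.length ≤ N}

instance {B : Type} {N : ℕ} : Monoid (TruncM B N) where
  one := ⟨[], by simp⟩
  mul u v := ⟨(u.1 ++ v.1).take N, by rw [List.length_take]; exact min_le_left _ _⟩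
  mul_assoc a b c := Subtype.ext (by
    show ((a.1 ++ b.1).take N ++ c.1).take N = (a.1 ++ (b.1 ++ c.1).take N).take N
    rw [take_take_append N N le_rfl, take_append_right, List.append_assoc])
  one_mul a := Subtype.ext (by
    show (([] : List B) ++ a.1).take N = a.1
    rw [List.nil_append]
    exact List.take_of_length_le a.2)
  mul_one a := Subtype.ext (by
    show (a.1 ++ ([] : List B)).take N = a.1
    rw [List.append_nil]
    exact List.take_of_length_le a.2)

@[simp] theorem TruncM.one_val {B : Type} {N : ℕ} : (1 : TruncM B N).1 = [] := rfl
@[simp] theorem TruncM.mul_val {B : Type} {N : ℕ} (u v : TruncM B N) :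
    (u * v).1 = (u.1 ++ v.1).take N := rfl

instance {B : Type} [Finite B] {N : ℕ} : Finite (TruncM B N) := by
  haveI : Finite (Option B) := Finite.of_equiv (B ⊕ (PUnit : Type)) (Equiv.optionEquivSumPUnit B).symm
  refine Finite.of_injective
    (fun l : TruncM B N => fun i : Fin (N + 1) => l.1[(i : ℕ)]?) ?_
  intro a b hab
  apply Subtype.ext
  apply List.ext_getElem?
  intro i
  by_cases hi : i < N + 1
  · exact congrFun hab ⟨i, hi⟩
  · have ha := a.2
    have hb := b.2
    rw [List.getElem?_eq_none (by omega), List.getElem?_eq_none (by omega)]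

/-- Truncation is a monoid morphism on well-matched words. -/
def truncMonoidHom (A : Type) [VPAlphabet A] (N : ℕ) : WM A →* TruncM A N where
  toFun w := ⟨w.1.take N, by rw [List.length_take]; exact min_le_left _ _⟩
  map_one' := Subtype.ext (by simp)
  map_mul' u v := Subtype.ext (by
    show (u.1 ++ v.1).take N = (u.1.take N ++ v.1.take N).take N
    rw [take_take_append N N le_rfl, take_append_right])

/-- The truncation monoid as an `Ext`-algebra with all functions as operations. -/
def truncExt (A : Type) [VPAlphabet A] (N : ℕ) : ExtAlgebra (TruncM A N) where
  O := ⊤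
  mulLeft_mem _ := trivial
  mulRight_mem _ := trivial

def truncOp {A : Type} [VPAlphabet A] {N : ℕ} (u v : List A) : Function.End (TruncM A N) :=
  fun m => ⟨(u ++ m.1 ++ v).take N, by rw [List.length_take]; exact min_le_left _ _⟩

/-- The truncation morphism of `Ext`-algebras. -/
def truncExtHom (A : Type) [VPAlphabet A] (N : ℕ) : ExtHomWM A (truncExt A N) where
  toMonoidHom := truncMonoidHom A N
  op u v _ := ⟨truncOp u v, trivial⟩
  op_one := by
    apply Subtype.ext
    funext m
    apply Subtype.ext
    show (([] : List A) ++ m.1 ++ []).take N = m.1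
    simpa using List.take_of_length_le m.2
  op_comp u v h u' v' h' h'' := by
    apply Subtype.ext
    funext m
    apply Subtype.ext
    show ((u ++ u') ++ m.1 ++ (v' ++ v)).take N = (u ++ ((u' ++ m.1 ++ v').take N) ++ v).take N
    rw [take_mid]
    simp [List.append_assoc]
  op_spec u v h x := by
    apply Subtype.ext
    show (u ++ (x.1.take N) ++ v).take N = (u ++ x.1 ++ v).take N
    exact take_mid N u x.1 v

/-- `x` and `y` can be separated by a finite `Ext`-algebra of cardinality at most `n`. -/
def SepBound (n : ℕ) (x y : WM A) : Prop :=
  ∃ (R : BExt) (φ : ExtHomWM A R.ext),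
    Nat.card R.carrier ≤ n ∧ φ.toMonoidHom x ≠ φ.toMonoidHom y

/-- The minimal cardinality of a finite `Ext`-algebra separating `x` and `y`. -/
noncomputable def sepDeg (x y : WM A) : ℕ := sInf {n | SepBound n x y}

/-- The profinite (ultra)metric on well-matched words. -/
noncomputable def pdist (x y : WM A) : ℝ :=
  open scoped Classical in if x = y then 0 else (2 : ℝ)⁻¹ ^ sepDeg x y

theorem pdist_nonneg (x y : WM A) : 0 ≤ pdist x y := by
  unfold pdist
  split
  · exact le_rfl
  · positivity

theorem sepBound_comm {n : ℕ} {x y : WM A} : SepBound n x y ↔ SepBound n y x := by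
  constructor <;> rintro ⟨R, φ, h1, h2⟩ <;> exact ⟨R, φ, h1, h2.symm⟩

theorem pdist_comm (x y : WM A) : pdist x y = pdist y x := by
  have h1 : sepDeg x y = sepDeg y x := by
    unfold sepDeg
    congr 1
    ext n
    exact sepBound_comm
  rcases eq_or_ne x y with rfl | h
  · rfl
  · unfold pdist
    rw [if_neg h, if_neg (Ne.symm h), h1]

theorem exists_sepBound [Finite A] {x y : WM A} (hxy : x ≠ y) : ∃ n, SepBound n x y := by
  classical
  set N := max x.1.length y.1.length with hN
  refine ⟨Nat.card (TruncM A N),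
    { carrier := TruncM A N, ext := truncExt A N }, truncExtHom A N, le_rfl, ?_⟩
  intro hcontra
  have hv : x.1.take N = y.1.take N := congrArg Subtype.val hcontra
  rw [List.take_of_length_le (le_max_left _ _ : x.1.length ≤ N),
    List.take_of_length_le (le_max_right _ _ : y.1.length ≤ N)] at hv
  exact hxy (Subtype.ext hv)

theorem pdist_ultra [Finite A] (x y z : WM A) :
    pdist x z ≤ max (pdist x y) (pdist y z) := by
  rcases eq_or_ne x z with rfl | hxz
  · calc pdist x x = 0 := by simp [pdist]
      _ ≤ _ := le_max_of_le_left (pdist_nonneg _ _)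
  rcases eq_or_ne x y with rfl | hxy
  · exact le_max_of_le_right le_rfl
  rcases eq_or_ne y z with rfl | hyz
  · exact le_max_of_le_left le_rfl
  have hSne : {n | SepBound n x z}.Nonempty := exists_sepBound hxz
  obtain ⟨R, φ, hcard, hne⟩ := Nat.sInf_mem hSne
  by_cases hxy' : φ.toMonoidHom x = φ.toMonoidHom y
  · have hb : SepBound (sepDeg x z) y z := ⟨R, φ, hcard, by rw [← hxy']; exact hne⟩
    have hle : sepDeg y z ≤ sepDeg x z := Nat.sInf_le hb
    calc pdist x z = (2 : ℝ)⁻¹ ^ sepDeg x z := by rw [pdist, if_neg hxz]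
      _ ≤ (2 : ℝ)⁻¹ ^ sepDeg y z := pow_le_pow_of_le_one (by norm_num) (by norm_num) hle
      _ = pdist y z := by rw [pdist, if_neg hyz]
      _ ≤ _ := le_max_right _ _
  · have hb : SepBound (sepDeg x z) x y := ⟨R, φ, hcard, hxy'⟩
    have hle : sepDeg x y ≤ sepDeg x z := Nat.sInf_le hb
    calc pdist x z = (2 : ℝ)⁻¹ ^ sepDeg x z := by rw [pdist, if_neg hxz]
      _ ≤ (2 : ℝ)⁻¹ ^ sepDeg x y := pow_le_pow_of_le_one (by norm_num) (by norm_num) hle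
      _ = pdist x y := by rw [pdist, if_neg hxy]
      _ ≤ _ := le_max_left _ _

noncomputable instance WM.metricSpace [Finite A] : MetricSpace (WM A) where
  dist := pdist
  dist_self x := by simp [pdist]
  dist_comm := pdist_comm
  dist_triangle x y z := by
    refine (pdist_ultra x y z).trans (max_le ?_ ?_)
    · exact le_add_of_nonneg_right (pdist_nonneg _ _)
    · exact le_add_of_nonneg_left (pdist_nonneg _ _)
  eq_of_dist_eq_zero := by
    intro x y h
    by_contra hxy
    have h' : pdist x y = 0 := h
    rw [pdist, if_neg hxy] at h'
    exact absurd h' (ne_of_gt (pow_pos (by norm_num) _))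

/-! ### Visibly pushdown automata -/

structure VPA (A : Type) [VPAlphabet A] where
  Q : Type
  [finQ : Finite Q]
  q0 : Q
  Γ : Type
  [finΓ : Finite Γ]
  bot : Γ
  δ : A → Q → Γ → Q × List Γ
  F : Set Q
  call_spec : ∀ a q G, VPAlphabet.kind a = VPKind.call → ∃ G', (δ a q G).2 = [G', G]
  ret_spec : ∀ a q G, VPAlphabet.kind a = VPKind.ret → (δ a q G).2 = []
  int_spec : ∀ a q G, VPAlphabet.kind a = VPKind.intern → (δ a q G).2 = [G]

attribute [instance] VPA.finQ VPA.finΓ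

def VPA.runAux (M : VPA A) : List A → M.Q → List M.Γ → M.Q × List M.Γ
  | [], q, s => (q, s)
  | _ :: w, q, [] => M.runAux w q []
  | a :: w, q, G :: s => M.runAux w (M.δ a q G).1 ((M.δ a q G).2 ++ s)

def VPA.Accepts (M : VPA A) (w : List A) : Prop :=
  (M.runAux w M.q0 [M.bot]).1 ∈ M.F ∧ (M.runAux w M.q0 [M.bot]).2 = [M.bot]

/-- The language of well-matched words accepted by a VPA. -/
def VPA.lang (M : VPA A) : Set (WM A) := {w | M.Accepts w.1}

/-- `L` is a visibly pushdown language: it is accepted by a visibly pushdown automaton. -/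
def IsVPL (L : Set (WM A)) : Prop := ∃ M : VPA A, L = M.lang

/-! ### Auxiliary run lemmas for VPAs -/

theorem runAux_nilstack (M : VPA A) : ∀ (w : List A) (q : M.Q), M.runAux w q [] = (q, []) := by
  intro w
  induction w with
  | nil => intro q; rfl
  | cons a w ih => intro q; exact ih q

theorem runAux_append (M : VPA A) : ∀ (u v : List A) (q : M.Q) (s : List M.Γ),
    M.runAux (u ++ v) q s = M.runAux v (M.runAux u q s).1 (M.runAux u q s).2 := by
  intro u
  induction u with
  | nil => intro v q s; rfl
  | cons a u ih =>
    intro v q s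
    cases s with
    | nil => exact ih v q []
    | cons G s => exact ih v (M.δ a q G).1 ((M.δ a q G).2 ++ s)

/-! ### The behaviour monoid of a VPA -/

def BehM (M : VPA A) : Type := M.Γ → M.Q → M.Q

instance (M : VPA A) : Monoid (BehM M) where
  one := fun _ q => q
  mul f g := fun G q => g G (f G q)
  mul_assoc _ _ _ := rfl
  one_mul _ := rfl
  mul_one _ := rfl

instance (M : VPA A) : Finite (BehM M) := by
  unfold BehM; infer_instance

def beh (M : VPA A) (x : WM A) : BehM M := fun G q => (M.runAux x.1 q [G]).1

theorem runAux_wm_exists (M : VPA A) {w : List A} (hw : WellMatched w) :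
    ∃ f : M.Γ → M.Q → M.Q, ∀ q G s, M.runAux w q (G :: s) = (f G q, G :: s) := by
  induction hw with
  | nil => exact ⟨fun _ q => q, fun q G s => rfl⟩
  | intern c hc =>
    refine ⟨fun G q => (M.δ c q G).1, fun q G s => ?_⟩
    show M.runAux [] (M.δ c q G).1 ((M.δ c q G).2 ++ s) = _
    rw [M.int_spec c q G hc]
    rfl
  | ext a b w ha hb hw ih =>
    obtain ⟨f', IH⟩ := ih
    refine ⟨fun G q =>
      (M.δ b (f' (Classical.choose (M.call_spec a q G ha)) (M.δ a q G).1)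
        (Classical.choose (M.call_spec a q G ha))).1, fun q G s => ?_⟩
    have hG' := Classical.choose_spec (M.call_spec a q G ha)
    show M.runAux (w ++ [b]) (M.δ a q G).1 ((M.δ a q G).2 ++ s) = _
    rw [hG', runAux_append]
    show M.runAux [b]
      (M.runAux w (M.δ a q G).1
        (Classical.choose (M.call_spec a q G ha) :: G :: s)).1
      (M.runAux w (M.δ a q G).1
        (Classical.choose (M.call_spec a q G ha) :: G :: s)).2 = _
    rw [IH]
    show M.runAux []
      (M.δ b _ (Classical.choose (M.call_spec a q G ha))).1
      ((M.δ b _ (Classical.choose (M.call_spec a q G ha))).2 ++ (G :: s)) = _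
    rw [M.ret_spec b _ _ hb]
    rfl
  | append u v hu hv ihu ihv =>
    obtain ⟨fu, IHu⟩ := ihu
    obtain ⟨fv, IHv⟩ := ihv
    refine ⟨fun G q => fv G (fu G q), fun q G s => ?_⟩
    rw [runAux_append, IHu]
    exact IHv _ G s

theorem runAux_wm (M : VPA A) {w : List A} (hw : WellMatched w) (q : M.Q) (G : M.Γ)
    (s : List M.Γ) : M.runAux w q (G :: s) = ((M.runAux w q [G]).1, G :: s) := by
  obtain ⟨f, hf⟩ := runAux_wm_exists M hw
  have h1 := hf q G s
  have h2 := hf q G []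
  rw [h1, h2]

theorem beh_mul (M : VPA A) (x y : WM A) : beh M (x * y) = beh M x * beh M y := by
  funext G q
  show (M.runAux (x.1 ++ y.1) q [G]).1 = (M.runAux y.1 (beh M x G q) [G]).1
  rw [runAux_append, runAux_wm M x.2]
  rfl

def behHom (M : VPA A) : WM A →* BehM M where
  toFun := beh M
  map_one' := rfl
  map_mul' := beh_mul M

theorem beh_ext (M : VPA A) (u v : List A) (h : WellMatched (u ++ v)) (x : WM A)
    (G : M.Γ) (q : M.Q) :
    beh M (extWord u v h x) G q =
      (M.runAux v (match (M.runAux u q [G]).2 with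
        | [] => (M.runAux u q [G]).1
        | G' :: _ => beh M x G' (M.runAux u q [G]).1) (M.runAux u q [G]).2).1 := by
  show (M.runAux (u ++ x.1 ++ v) q [G]).1 = _
  rw [runAux_append, runAux_append]
  rcases hs : (M.runAux u q [G]).2 with _ | ⟨G', t⟩
  · rw [runAux_nilstack]
  · rw [runAux_wm M x.2]
    rfl

theorem beh_ext_congr (M : VPA A) (u v : List A) (h : WellMatched (u ++ v)) {x y : WM A}
    (hxy : beh M x = beh M y) : beh M (extWord u v h x) = beh M (extWord u v h y) := by
  funext G q
  rw [beh_ext, beh_ext, hxy]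

def behExtAlg (M : VPA A) : ExtAlgebra (BehM M) where
  O := ⊤
  mulLeft_mem _ := trivial
  mulRight_mem _ := trivial

open Classical in
noncomputable def behOp (M : VPA A) (u v : List A) (h : WellMatched (u ++ v)) :
    Function.End (BehM M) :=
  fun f => if hx : ∃ x : WM A, f = beh M x then
    beh M (extWord u v h (Classical.choose hx)) else f

noncomputable def behExtHom (M : VPA A) : ExtHomWM A (behExtAlg M) where
  toMonoidHom := behHom M
  op u v h := ⟨behOp M u v h, trivial⟩
  op_one := by
    apply Subtype.ext
    funext f
    show behOp M [] [] _ f = f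
    unfold behOp
    split
    next hx =>
      rw [show extWord [] [] WellMatched.nil (Classical.choose hx) = Classical.choose hx from
        Subtype.ext (by simp)]
      exact (Classical.choose_spec hx).symm
    next => rfl
  op_comp := by
    intro u v h u' v' h' h''
    apply Subtype.ext
    funext f
    show behOp M (u ++ u') (v' ++ v) h'' f = behOp M u v h (behOp M u' v' h' f)
    by_cases hx : ∃ x : WM A, f = beh M x
    · have hinner : behOp M u' v' h' f = beh M (extWord u' v' h' (Classical.choose hx)) := by
        simp only [behOp]; rw [dif_pos hx]
      have hx2 : ∃ x : WM A, beh M (extWord u' v' h' (Classical.choose hx)) = beh M x := ⟨_, rfl⟩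
      have houter : behOp M u v h (beh M (extWord u' v' h' (Classical.choose hx))) =
          beh M (extWord u v h (Classical.choose hx2)) := by
        simp only [behOp]; rw [dif_pos hx2]
      have hLHS : behOp M (u ++ u') (v' ++ v) h'' f =
          beh M (extWord (u ++ u') (v' ++ v) h'' (Classical.choose hx)) := by
        simp only [behOp]; rw [dif_pos hx]
      rw [hinner, houter, hLHS]
      have hc2 : beh M (Classical.choose hx2) = beh M (extWord u' v' h' (Classical.choose hx)) :=
        (Classical.choose_spec hx2).symm
      rw [beh_ext_congr M u v h hc2]
      have harg : extWord (u ++ u') (v' ++ v) h'' (Classical.choose hx) =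
          extWord u v h (extWord u' v' h' (Classical.choose hx)) :=
        Subtype.ext (by simp)
      rw [harg]
    · have hinner : behOp M u' v' h' f = f := by simp only [behOp]; rw [dif_neg hx]
      have h1 : behOp M (u ++ u') (v' ++ v) h'' f = f := by simp only [behOp]; rw [dif_neg hx]
      have h2 : behOp M u v h f = f := by simp only [behOp]; rw [dif_neg hx]
      rw [hinner, h1, h2]
  op_spec := by
    intro u v h x
    show behOp M u v h (behHom M x) = behHom M (extWord u v h x)
    have hx : ∃ y : WM A, behHom M x = beh M y := ⟨x, rfl⟩
    simp only [behOp]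
    rw [dif_pos hx]
    exact beh_ext_congr M u v h (Classical.choose_spec hx).symm

theorem accepts_iff_beh (M : VPA A) (w : WM A) :
    M.Accepts w.1 ↔ beh M w M.bot M.q0 ∈ M.F := by
  unfold VPA.Accepts
  rw [runAux_wm M w.2]
  simp [beh]

theorem isVPL_sepBound {L : Set (WM A)} (hL : IsVPL L) :
    ∃ n : ℕ, ∀ x ∈ L, ∀ y ∉ L, SepBound n x y := by
  obtain ⟨M, rfl⟩ := hL
  refine ⟨Nat.card (BehM M), fun x hx y hy => ?_⟩
  refine ⟨{ carrier := BehM M, ext := behExtAlg M }, behExtHom M, le_rfl, ?_⟩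
  intro hcontra
  have hbeh : beh M x = beh M y := hcontra
  rw [VPA.lang, Set.mem_setOf_eq, accepts_iff_beh] at hx hy
  rw [hbeh] at hx
  exact hy hx

/-! ### A universal finite discretization -/

structure MData (A : Type) (n : ℕ) where
  mul : Fin n → Fin n → Fin n
  e : Fin n
  io : A → Fin n
  ops : A → A → Fin n → Fin n

instance [Finite A] {n : ℕ} : Finite (MData A n) :=
  Finite.of_injective (fun d => (d.mul, d.e, d.io, d.ops)) (by
    rintro ⟨m, e, i, o⟩ ⟨m', e', i', o'⟩ h
    simp only [Prod.mk.injEq] at h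
    obtain ⟨h1, h2, h3, h4⟩ := h
    subst h1; subst h2; subst h3; subst h4
    rfl)

def mstep1 {n : ℕ} (d : MData A n) (c : A) (p : Fin n × List (Fin n × A)) :
    Fin n × List (Fin n × A) :=
  if VPAlphabet.kind c = VPKind.intern then (d.mul p.1 (d.io c), p.2)
  else if VPAlphabet.kind c = VPKind.call then (d.e, (p.1, c) :: p.2)
  else match p.2 with
    | [] => p
    | (r, a) :: sg => (d.mul r (d.ops a c p.1), sg)

def mstep {n : ℕ} (d : MData A n) : List A → Fin n × List (Fin n × A) → Fin n × List (Fin n × A)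
  | [], p => p
  | c :: w, p => mstep d w (mstep1 d c p)

theorem mstep1_intern {n : ℕ} (d : MData A n) {c : A}
    (hc : VPAlphabet.kind c = VPKind.intern) (q : Fin n) (σ : List (Fin n × A)) :
    mstep1 d c (q, σ) = (d.mul q (d.io c), σ) := by
  rw [mstep1, if_pos hc]

theorem mstep1_call {n : ℕ} (d : MData A n) {c : A}
    (hc : VPAlphabet.kind c = VPKind.call) (q : Fin n) (σ : List (Fin n × A)) :
    mstep1 d c (q, σ) = (d.e, (q, c) :: σ) := by
  rw [mstep1, if_neg (by rw [hc]; simp), if_pos hc]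

theorem mstep1_ret {n : ℕ} (d : MData A n) {c : A}
    (hc : VPAlphabet.kind c = VPKind.ret) (q r : Fin n) (a : A) (σ' : List (Fin n × A)) :
    mstep1 d c (q, (r, a) :: σ') = (d.mul r (d.ops a c q), σ') := by
  rw [mstep1, if_neg (by rw [hc]; simp), if_neg (by rw [hc]; simp)]

theorem mstep_cons_intern {n : ℕ} (d : MData A n) {c : A}
    (hc : VPAlphabet.kind c = VPKind.intern) (w : List A) (q : Fin n)
    (σ : List (Fin n × A)) : mstep d (c :: w) (q, σ) = mstep d w (d.mul q (d.io c), σ) := by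
  rw [mstep, mstep1_intern d hc]

theorem mstep_cons_call {n : ℕ} (d : MData A n) {c : A}
    (hc : VPAlphabet.kind c = VPKind.call) (w : List A) (q : Fin n)
    (σ : List (Fin n × A)) : mstep d (c :: w) (q, σ) = mstep d w (d.e, (q, c) :: σ) := by
  rw [mstep, mstep1_call d hc]

theorem mstep_cons_ret {n : ℕ} (d : MData A n) {c : A}
    (hc : VPAlphabet.kind c = VPKind.ret) (w : List A) (q p : Fin n) (a : A)
    (σ' : List (Fin n × A)) :
    mstep d (c :: w) (q, (p, a) :: σ') = mstep d w (d.mul p (d.ops a c q), σ') := by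
  rw [mstep, mstep1_ret d hc]

theorem mstep_append {n : ℕ} (d : MData A n) (u v : List A)
    (p : Fin n × List (Fin n × A)) : mstep d (u ++ v) p = mstep d v (mstep d u p) := by
  induction u generalizing p with
  | nil => rfl
  | cons c u ih =>
    rw [List.cons_append, mstep, mstep]
    exact ih _

def Fd {n : ℕ} (d : MData A n) (w : List A) (q : Fin n) : Fin n := (mstep d w (q, [])).1

theorem mstep_wm_exists {n : ℕ} (d : MData A n) {w : List A} (hw : WellMatched w) :
    ∃ f : Fin n → Fin n, ∀ q σ, mstep d w (q, σ) = (f q, σ) := by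
  induction hw with
  | nil => exact ⟨id, fun q σ => rfl⟩
  | intern c hc =>
    exact ⟨fun q => d.mul q (d.io c), fun q σ => by rw [mstep_cons_intern d hc]; rfl⟩
  | ext a b w ha hb hw ih =>
    obtain ⟨f, IH⟩ := ih
    refine ⟨fun q => d.mul q (d.ops a b (f d.e)), fun q σ => ?_⟩
    rw [List.cons_append, mstep_cons_call d ha, mstep_append, IH, mstep_cons_ret d hb]
    rfl
  | append u v hu hv ihu ihv =>
    obtain ⟨fu, IHu⟩ := ihu
    obtain ⟨fv, IHv⟩ := ihv
    exact ⟨fun q => fv (fu q), fun q σ => by rw [mstep_append, IHu, IHv]⟩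

theorem mstep_wm {n : ℕ} (d : MData A n) {w : List A} (hw : WellMatched w) (q : Fin n)
    (σ : List (Fin n × A)) : mstep d w (q, σ) = (Fd d w q, σ) := by
  obtain ⟨f, hf⟩ := mstep_wm_exists d hw
  rw [hf, Fd, hf]

theorem Fd_nil {n : ℕ} (d : MData A n) (q : Fin n) : Fd d [] q = q := rfl

theorem Fd_intern {n : ℕ} (d : MData A n) {c : A}
    (hc : VPAlphabet.kind c = VPKind.intern) (q : Fin n) :
    Fd d [c] q = d.mul q (d.io c) := by
  rw [Fd, mstep_cons_intern d hc]
  rfl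

theorem Fd_ext {n : ℕ} (d : MData A n) {a b : A} {w : List A}
    (ha : VPAlphabet.kind a = VPKind.call) (hb : VPAlphabet.kind b = VPKind.ret)
    (hw : WellMatched w) (q : Fin n) :
    Fd d (a :: w ++ [b]) q = d.mul q (d.ops a b (Fd d w d.e)) := by
  rw [Fd, List.cons_append, mstep_cons_call d ha, mstep_append, mstep_wm d hw,
    mstep_cons_ret d hb]
  rfl

theorem Fd_append {n : ℕ} (d : MData A n) {u v : List A} (hu : WellMatched u)
    (q : Fin n) : Fd d (u ++ v) q = Fd d v (Fd d u q) := by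
  rw [Fd, mstep_append, mstep_wm d hu]
  rfl

theorem wm_pair {a b : A} (ha : VPAlphabet.kind a = VPKind.call)
    (hb : VPAlphabet.kind b = VPKind.ret) : WellMatched ([a] ++ [b]) :=
  WellMatched.ext a b [] ha hb WellMatched.nil

/-- Coding lemma: any morphism into a finite `Ext`-algebra of cardinality at most `n`
factors through the universal discretization data. -/
theorem coding {n : ℕ} (R : BExt) (φ : ExtHomWM A R.ext) (hcard : Nat.card R.carrier ≤ n) :
    ∃ (d : MData A n) (c : R.carrier → Fin n), Function.Injective c ∧ d.e = c 1 ∧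
      ∀ (w : List A) (hw : WellMatched w) (r : R.carrier),
        Fd d w (c r) = c (r * φ.toMonoidHom ⟨w, hw⟩) := by
  classical
  let eqv : R.carrier ≃ Fin (Nat.card R.carrier) := Finite.equivFin R.carrier
  let c : R.carrier → Fin n := fun r => Fin.castLE hcard (eqv r)
  have hinj : Function.Injective c := fun r r' h => by
    apply eqv.injective
    exact Fin.castLE_injective hcard h
  let ci : Fin n → R.carrier := Function.invFun c
  have hci : ∀ r, ci (c r) = r := fun r => Function.leftInverse_invFun hinj r
  let d : MData A n :=
    { mul := fun p q => c (ci p * ci q), e := c 1,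
      io := fun a => if h : VPAlphabet.kind a = VPKind.intern then
        c (φ.toMonoidHom ⟨[a], WellMatched.intern a h⟩) else c 1,
      ops := fun a b p =>
        if h : VPAlphabet.kind a = VPKind.call ∧ VPAlphabet.kind b = VPKind.ret then
          c ((φ.op [a] [b] (wm_pair h.1 h.2) : Function.End R.carrier) (ci p))
        else p }
  have hmul : ∀ p q, d.mul p q = c (ci p * ci q) := fun _ _ => rfl
  have hio : ∀ (a : A) (h : VPAlphabet.kind a = VPKind.intern),
      d.io a = c (φ.toMonoidHom ⟨[a], WellMatched.intern a h⟩) := fun a h => by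
    show (if h : _ then _ else _) = _
    rw [dif_pos h]
  have hops : ∀ (a b : A) (ha : VPAlphabet.kind a = VPKind.call)
      (hb : VPAlphabet.kind b = VPKind.ret) (p : Fin n),
      d.ops a b p = c ((φ.op [a] [b] (wm_pair ha hb) : Function.End R.carrier) (ci p)) :=
    fun a b ha hb p => by
      show (if h : _ then _ else _) = _
      rw [dif_pos ⟨ha, hb⟩]
  have he : d.e = c 1 := rfl
  refine ⟨d, c, hinj, rfl, ?_⟩
  intro w hw
  induction hw with
  | nil =>
    intro r
    rw [Fd_nil]
    have h1 : φ.toMonoidHom ⟨[], WellMatched.nil⟩ = 1 := map_one φ.toMonoidHom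
    rw [h1, mul_one]
  | intern c₀ hc =>
    intro r
    rw [Fd_intern _ hc, hmul, hio c₀ hc, hci, hci]
  | ext a b w ha hb hw ih =>
    intro r
    rw [Fd_ext _ ha hb hw, he]
    have hee : Fd d w (c 1) = c (φ.toMonoidHom ⟨w, hw⟩) := by rw [ih 1, one_mul]
    rw [hee, hops a b ha hb, hci, hmul, hci, hci]
    have hspec := φ.op_spec [a] [b] (wm_pair ha hb) ⟨w, hw⟩
    rw [hspec]
    have harg : extWord [a] [b] (wm_pair ha hb) ⟨w, hw⟩ =
        (⟨a :: w ++ [b], WellMatched.ext a b w ha hb hw⟩ : WM A) := Subtype.ext rfl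
    rw [harg]
  | append u v hu hv ihu ihv =>
    intro r
    rw [Fd_append _ hu, ihu r, ihv (r * φ.toMonoidHom ⟨u, hu⟩)]
    have h0 : φ.toMonoidHom ⟨u ++ v, WellMatched.append u v hu hv⟩ =
        φ.toMonoidHom ⟨u, hu⟩ * φ.toMonoidHom ⟨v, hv⟩ := by
      have xu : WM A := ⟨u, hu⟩
      let yu : WM A := ⟨u, hu⟩
      let yv : WM A := ⟨v, hv⟩
      have hx : (⟨u ++ v, WellMatched.append u v hu hv⟩ : WM A) = yu * yv := rfl
      rw [hx, map_mul]
    rw [h0, mul_assoc]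

/-- The finite discretization map at level `n`. -/
def Psi (n : ℕ) (x : WM A) : MData A n → Fin n := fun d => Fd d x.1 d.e

theorem psi_eq_sep {n : ℕ} {x y : WM A} (h : Psi n x = Psi n y) (R : BExt)
    (φ : ExtHomWM A R.ext) (hcard : Nat.card R.carrier ≤ n) :
    φ.toMonoidHom x = φ.toMonoidHom y := by
  obtain ⟨d, c, hinj, he, hmain⟩ := coding R φ hcard
  have hx := hmain x.1 x.2 1
  have hy := hmain y.1 y.2 1
  have hdx : Psi n x d = Fd d x.1 d.e := rfl
  have hdy : Psi n y d = Fd d y.1 d.e := rfl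
  have hcong := congrFun h d
  rw [hdx, hdy, he, hx, hy, one_mul, one_mul] at hcong
  have hxx : (⟨x.1, x.2⟩ : WM A) = x := rfl
  have hyy : (⟨y.1, y.2⟩ : WM A) = y := rfl
  rw [hxx, hyy] at hcong
  exact hinj hcong

theorem psi_dist [Finite A] {n : ℕ} {x y : WM A} (h : Psi n x = Psi n y) :
    pdist x y ≤ (2 : ℝ)⁻¹ ^ (n + 1) := by
  rcases eq_or_ne x y with rfl | hxy
  · rw [pdist, if_pos rfl]
    positivity
  · have hne : {m | SepBound m x y}.Nonempty := exists_sepBound hxy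
    have hgt : n + 1 ≤ sepDeg x y := by
      by_contra hle
      push_neg at hle
      obtain ⟨R, φ, hcard, hneq⟩ := Nat.sInf_mem hne
      have hle2 : sInf {m | SepBound m x y} ≤ n := by
        unfold sepDeg at hle
        omega
      exact hneq (psi_eq_sep h R φ (hcard.trans hle2))
    rw [pdist, if_neg hxy]
    exact pow_le_pow_of_le_one (by norm_num) (by norm_num) hgt

theorem wm_totallyBounded [Finite A] : TotallyBounded (Set.univ : Set (WM A)) := by
  apply Metric.totallyBounded_of_finite_discretization
  intro ε hε
  obtain ⟨n, hn⟩ : ∃ n : ℕ, (2 : ℝ)⁻¹ ^ (n + 1) < ε := by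
    obtain ⟨n, hn⟩ := exists_pow_lt_of_lt_one hε (by norm_num : (2 : ℝ)⁻¹ < 1)
    exact ⟨n, lt_of_le_of_lt
      (pow_le_pow_of_le_one (by norm_num) (by norm_num) (Nat.le_succ n)) hn⟩
  haveI : Fintype (MData A n → Fin n) := Fintype.ofFinite _
  refine ⟨MData A n → Fin n, inferInstance, fun x => Psi n x.1, fun x y hxy => ?_⟩
  exact lt_of_le_of_lt (psi_dist hxy) hn

open UniformSpace in
instance [Finite A] : CompactSpace (Completion (WM A)) := by
  refine ⟨?_⟩
  have h1 : Dense (Set.range ((↑) : WM A → Completion (WM A))) :=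
    Completion.denseRange_coe
  have h2 : TotallyBounded (Set.range ((↑) : WM A → Completion (WM A))) := by
    have := (wm_totallyBounded (A := A)).image
      (Completion.uniformContinuous_coe (WM A))
    simpa [Set.image_univ] using this
  have h3 : TotallyBounded (Set.univ : Set (Completion (WM A))) := by
    rw [← h1.closure_eq]
    exact h2.closure
  exact isCompact_iff_totallyBounded_isComplete.mpr
    ⟨h3, completeSpace_iff_isComplete_univ.mp inferInstance⟩

/-! ### From saturation to a VPA -/

instance finiteOption {β : Type*} [Finite β] : Finite (Option β) :=
  Finite.of_equiv (β ⊕ (PUnit : Type)) (Equiv.optionEquivSumPUnit β).symm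

noncomputable def satVPA [Finite A] (L : Set (WM A)) (n : ℕ) : VPA A where
  Q := MData A n → Fin n
  q0 := fun d => d.e
  Γ := Option ((MData A n → Fin n) × A)
  bot := none
  δ a q G :=
    if VPAlphabet.kind a = VPKind.intern then (fun d => d.mul (q d) (d.io a), [G])
    else if VPAlphabet.kind a = VPKind.call then (fun d => d.e, [some (q, a), G])
    else ((match G with
      | some pb => fun d => d.mul (pb.1 d) (d.ops pb.2 a (q d))
      | none => q), [])
  F := {q | ∃ w ∈ L, Psi n w = q}
  call_spec := by
    intro a q G h
    refine ⟨some (q, a), ?_⟩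
    simp [h]
  ret_spec := by
    intro a q G h
    simp [h]
  int_spec := by
    intro a q G h
    simp [h]

theorem satVPA_δ_intern [Finite A] (L : Set (WM A)) (n : ℕ) {a : A}
    (h : VPAlphabet.kind a = VPKind.intern) (q : MData A n → Fin n)
    (G : Option ((MData A n → Fin n) × A)) :
    (satVPA L n).δ a q G = ((fun d : MData A n => d.mul (q d) (d.io a)), [G]) := by
  show (if _ then _ else _) = _
  simp [h]; rfl

theorem satVPA_δ_call [Finite A] (L : Set (WM A)) (n : ℕ) {a : A}
    (h : VPAlphabet.kind a = VPKind.call) (q : MData A n → Fin n)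
    (G : Option ((MData A n → Fin n) × A)) :
    (satVPA L n).δ a q G = ((fun d : MData A n => d.e), [some (q, a), G]) := by
  show (if _ then _ else _) = _
  simp [h]; rfl

theorem satVPA_δ_ret [Finite A] (L : Set (WM A)) (n : ℕ) {a : A}
    (h : VPAlphabet.kind a = VPKind.ret) (q p : MData A n → Fin n) (b : A) :
    (satVPA L n).δ a q (some (p, b)) =
      ((fun d : MData A n => d.mul (p d) (d.ops b a (q d))), []) := by
  show (if _ then _ else _) = _
  simp [h]; rfl

theorem satVPA_run [Finite A] (L : Set (WM A)) (n : ℕ) {w : List A} (hw : WellMatched w) :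
    ∀ (q : MData A n → Fin n) (s : List (Option ((MData A n → Fin n) × A))), s ≠ [] →
      (satVPA L n).runAux w q s = ((fun d : MData A n => Fd d w (q d)), s) := by
  induction hw with
  | nil =>
    intro q s hs
    rfl
  | intern c hc =>
    intro q s hs
    cases s with
    | nil => exact absurd rfl hs
    | cons G s' =>
      show (satVPA L n).runAux [] ((satVPA L n).δ c q G).1
        (List.append ((satVPA L n).δ c q G).2 s') = _
      rw [satVPA_δ_intern L n hc]
      refine Prod.ext (funext fun d => ?_) rfl
      show d.mul (q d) (d.io c) = Fd d [c] (q d)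
      rw [Fd_intern d hc]
  | ext a b w' ha hb hw' ih =>
    intro q s hs
    cases s with
    | nil => exact absurd rfl hs
    | cons G s' =>
      show (satVPA L n).runAux (w' ++ [b]) ((satVPA L n).δ a q G).1
        (List.append ((satVPA L n).δ a q G).2 s') = _
      rw [satVPA_δ_call L n ha]
      show (satVPA L n).runAux (w' ++ [b]) (fun d : MData A n => d.e)
        (some (q, a) :: G :: s') = _
      erw [runAux_append, ih _ (some (q, a) :: G :: s') (by simp)]
      show (satVPA L n).runAux []
        ((satVPA L n).δ b _ (some (q, a))).1
        (List.append ((satVPA L n).δ b _ (some (q, a))).2 (G :: s')) = _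
      rw [satVPA_δ_ret L n hb]
      refine Prod.ext (funext fun d => ?_) rfl
      show d.mul (q d) (d.ops a b (Fd d w' d.e)) = Fd d (a :: w' ++ [b]) (q d)
      rw [Fd_ext d ha hb hw']
  | append u v hu hv ihu ihv =>
    intro q s hs
    erw [runAux_append, ihu q s hs, ihv _ s hs]
    refine Prod.ext (funext fun d => ?_) rfl
    show Fd d v (Fd d u (q d)) = Fd d (u ++ v) (q d)
    rw [Fd_append d hu]

theorem sat_isVPL [Finite A] {L : Set (WM A)} {ε : ℝ} (hε : 0 < ε)
    (hsat : ∀ x y : WM A, pdist x y < ε → (x ∈ L ↔ y ∈ L)) : IsVPL L := by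
  obtain ⟨n, hn⟩ : ∃ n : ℕ, (2 : ℝ)⁻¹ ^ (n + 1) < ε := by
    obtain ⟨n, hn⟩ := exists_pow_lt_of_lt_one hε (by norm_num : (2 : ℝ)⁻¹ < 1)
    exact ⟨n, lt_of_le_of_lt
      (pow_le_pow_of_le_one (by norm_num) (by norm_num) (Nat.le_succ n)) hn⟩
  refine ⟨satVPA L n, ?_⟩
  ext w
  have hrun := satVPA_run L n w.2 (satVPA L n).q0 [(satVPA L n).bot] (by simp)
  show w ∈ L ↔ (satVPA L n).Accepts w.1
  erw [VPA.Accepts, hrun]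
  constructor
  · intro hw
    exact ⟨⟨w, hw, rfl⟩, rfl⟩
  · rintro ⟨⟨w', hw', hpsi⟩, -⟩
    have hps : Psi n w' = Psi n w := hpsi
    exact (hsat w' w (lt_of_le_of_lt (psi_dist hps) hn)).mp hw'

theorem isVPL_sat [Finite A] {L : Set (WM A)} (hL : IsVPL L) :
    ∃ ε : ℝ, 0 < ε ∧ ∀ x y : WM A, pdist x y < ε → (x ∈ L ↔ y ∈ L) := by
  obtain ⟨n, hn⟩ := isVPL_sepBound hL
  refine ⟨(2 : ℝ)⁻¹ ^ n, by positivity, fun x y hxy => ?_⟩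
  constructor
  · intro hx
    by_contra hy
    have hsep := hn x hx y hy
    have hle : sepDeg x y ≤ n := Nat.sInf_le hsep
    have hne : x ≠ y := fun h => hy (h ▸ hx)
    rw [pdist, if_neg hne] at hxy
    have := pow_le_pow_of_le_one (by norm_num : (0:ℝ) ≤ 2⁻¹) (by norm_num) hle
    linarith
  · intro hy
    by_contra hx
    have hsep := hn y hy x hx
    have hle : sepDeg y x ≤ n := Nat.sInf_le hsep
    have hne : x ≠ y := fun h => hx (h ▸ hy)
    rw [pdist_comm, pdist, if_neg (Ne.symm hne)] at hxy
    have := pow_le_pow_of_le_one (by norm_num : (0:ℝ) ≤ 2⁻¹) (by norm_num) hle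
    linarith

/-! ### Topological glue -/

theorem wm_isolated [Finite A] (x : WM A) :
    ∃ ε : ℝ, 0 < ε ∧ ∀ y : WM A, pdist x y < ε → y = x := by
  classical
  set N := x.1.length + 1 with hN
  refine ⟨(2 : ℝ)⁻¹ ^ Nat.card (TruncM A N), by positivity, fun y hy => ?_⟩
  by_contra hne
  have hsep : SepBound (Nat.card (TruncM A N)) x y := by
    refine ⟨{ carrier := TruncM A N, ext := truncExt A N }, truncExtHom A N, le_rfl, ?_⟩
    intro hc
    have hv : x.1.take N = y.1.take N := congrArg Subtype.val hc
    rw [List.take_of_length_le (by omega : x.1.length ≤ N)] at hv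
    rcases le_or_gt y.1.length N with h | h
    · rw [List.take_of_length_le h] at hv
      exact hne (Subtype.ext hv.symm)
    · have hlen : (y.1.take N).length = N := by
        rw [List.length_take]
        omega
      rw [← hv] at hlen
      omega
  have hle : sepDeg x y ≤ Nat.card (TruncM A N) := Nat.sInf_le hsep
  have hxy : x ≠ y := fun h => hne h.symm
  rw [pdist, if_neg hxy] at hy
  have := pow_le_pow_of_le_one (by norm_num : (0:ℝ) ≤ 2⁻¹) (by norm_num) hle
  linarith

instance [Finite A] : DiscreteTopology (WM A) := by
  rw [discreteTopology_iff_isOpen_singleton]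
  intro x
  obtain ⟨ε, hε, h⟩ := wm_isolated x
  rw [Metric.isOpen_singleton_iff]
  refine ⟨ε, hε, fun y hy => ?_⟩
  apply h y
  rw [pdist_comm]
  exact hy

open UniformSpace in
theorem preimage_closure_image [Finite A] (L : Set (WM A)) :
    ((↑) : WM A → Completion (WM A)) ⁻¹' closure (((↑) : WM A → Completion (WM A)) '' L)
      = L := by
  have hemb : Topology.IsEmbedding ((↑) : WM A → Completion (WM A)) :=
    (Completion.isDenseEmbedding_coe).isEmbedding
  rw [← hemb.closure_eq_preimage_closure_image L]
  exact closure_eq_iff_isClosed.mpr (isClosed_discrete L)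

open UniformSpace in
theorem sat_closure [Finite A] {L : Set (WM A)} {ε : ℝ} (hε : 0 < ε)
    (hsat : ∀ x y : WM A, pdist x y < ε → (x ∈ L ↔ y ∈ L)) :
    IsClopen (closure (((↑) : WM A → Completion (WM A)) '' L)) ∧
      closure (((↑) : WM A → Completion (WM A)) '' Lᶜ) =
        (closure (((↑) : WM A → Completion (WM A)) '' L))ᶜ := by
  classical
  set ι : WM A → Completion (WM A) := (↑) with hι
  set χ : WM A → ℝ := fun w => if w ∈ L then 1 else 0 with hχ
  have huc : UniformContinuous χ := by
    rw [Metric.uniformContinuous_iff]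
    intro δ hδ
    refine ⟨ε, hε, fun {x y} h => ?_⟩
    have hmem : (x ∈ L) ↔ (y ∈ L) := hsat x y h
    have : χ x = χ y := by
      simp only [hχ]
      by_cases hx : x ∈ L
      · rw [if_pos hx, if_pos (hmem.mp hx)]
      · rw [if_neg hx, if_neg (fun h' => hx (hmem.mpr h'))]
    rw [this, dist_self]
    exact hδ
  set g : Completion (WM A) → ℝ := Completion.extension χ with hg
  have hgc : Continuous g := Completion.continuous_extension
  have hgι : ∀ w, g (ι w) = χ w := fun w => Completion.extension_coe huc w
  have hdense : DenseRange ι := Completion.denseRange_coe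
  have hrange : ∀ z, g z = 0 ∨ g z = 1 := by
    have hcl : IsClosed (g ⁻¹' {0, 1}) :=
      IsClosed.preimage hgc (Set.Finite.isClosed (Set.toFinite {(0:ℝ), 1}))
    have hsub : Set.range ι ⊆ g ⁻¹' {0, 1} := by
      rintro _ ⟨w, rfl⟩
      rw [Set.mem_preimage, hgι]
      by_cases h : w ∈ L
      · right; rw [hχ]; simp [h]
      · left; rw [hχ]; simp [h]
    have huniv : Set.univ ⊆ g ⁻¹' {0, 1} := by
      rw [← hdense.closure_range]
      exact hcl.closure_subset_iff.mpr hsub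
    intro z
    have := huniv (Set.mem_univ z)
    rw [Set.mem_preimage] at this
    rcases this with h | h
    · exact Or.inl h
    · exact Or.inr h
  have hLsub : ι '' L ⊆ g ⁻¹' {1} := by
    rintro _ ⟨w, hw, rfl⟩
    rw [Set.mem_preimage, hgι, hχ]
    simp [hw]
  have hLcsub : ι '' Lᶜ ⊆ g ⁻¹' {0} := by
    rintro _ ⟨w, hw, rfl⟩
    rw [Set.mem_preimage, hgι, hχ]
    show (if w ∈ L then (1:ℝ) else 0) ∈ {(0:ℝ)}
    rw [if_neg hw]
    rfl
  have h1closed : IsClosed (g ⁻¹' {1}) := IsClosed.preimage hgc isClosed_singleton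
  have h0closed : IsClosed (g ⁻¹' {0}) := IsClosed.preimage hgc isClosed_singleton
  have hunion : closure (ι '' L) ∪ closure (ι '' Lᶜ) = Set.univ := by
    rw [← closure_union, ← Set.image_union, Set.union_compl_self, Set.image_univ]
    exact hdense.closure_range
  have hclL : closure (ι '' L) = g ⁻¹' {1} := by
    apply Set.Subset.antisymm (h1closed.closure_subset_iff.mpr hLsub)
    intro z hz
    rw [Set.mem_preimage, Set.mem_singleton_iff] at hz
    have hz2 : z ∈ closure (ι '' L) ∪ closure (ι '' Lᶜ) := by
      rw [hunion]; exact Set.mem_univ z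
    rcases hz2 with h | h
    · exact h
    · have : g z = 0 := h0closed.closure_subset_iff.mpr hLcsub h
      rw [hz] at this
      norm_num at this
  have hclLc : closure (ι '' Lᶜ) = g ⁻¹' {0} := by
    apply Set.Subset.antisymm (h0closed.closure_subset_iff.mpr hLcsub)
    intro z hz
    rw [Set.mem_preimage, Set.mem_singleton_iff] at hz
    have hz2 : z ∈ closure (ι '' L) ∪ closure (ι '' Lᶜ) := by
      rw [hunion]; exact Set.mem_univ z
    rcases hz2 with h | h
    · have : g z = 1 := h1closed.closure_subset_iff.mpr hLsub h
      rw [hz] at this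
      norm_num at this
    · exact h
  have hopen : IsOpen (g ⁻¹' {1}) := by
    have heq : g ⁻¹' {1} = g ⁻¹' (Set.Ioi (1/2 : ℝ)) := by
      ext z
      rw [Set.mem_preimage, Set.mem_preimage, Set.mem_singleton_iff, Set.mem_Ioi]
      rcases hrange z with h | h <;> rw [h] <;> norm_num
    rw [heq]
    exact isOpen_Ioi.preimage hgc
  refine ⟨⟨hclL ▸ h1closed, hclL ▸ hopen⟩, ?_⟩
  rw [hclL, hclLc]
  ext z
  rw [Set.mem_preimage, Set.mem_compl_iff, Set.mem_preimage,
    Set.mem_singleton_iff, Set.mem_singleton_iff]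
  rcases hrange z with h | h <;> rw [h] <;> norm_num

open UniformSpace in
theorem clopen_sat [Finite A] {K : Set (Completion (WM A))} (hK : IsClopen K) :
    ∃ ε : ℝ, 0 < ε ∧ ∀ x y : WM A, pdist x y < ε →
      (((x : Completion (WM A)) ∈ K) ↔ ((y : Completion (WM A)) ∈ K)) := by
  rcases Set.eq_empty_or_nonempty K with rfl | hKne
  · exact ⟨1, one_pos, fun x y _ => by simp⟩
  rcases Set.eq_empty_or_nonempty Kᶜ with hKc | hKcne
  · have : K = Set.univ := by
      rw [← Set.compl_empty, ← hKc, compl_compl]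
    subst this
    exact ⟨1, one_pos, fun x y _ => by simp⟩
  have hKcomp : IsCompact K := hK.isClosed.isCompact
  obtain ⟨x₀, hx₀, hmin⟩ := hKcomp.exists_isMinOn hKne
    ((Metric.continuous_infDist_pt Kᶜ).continuousOn)
  have hεpos : 0 < Metric.infDist x₀ Kᶜ := by
    rw [← (hK.compl.isClosed).notMem_iff_infDist_pos hKcne]
    · simpa using hx₀
  refine ⟨Metric.infDist x₀ Kᶜ, hεpos, fun x y hxy => ?_⟩
  have hdist : dist (x : Completion (WM A)) (y : Completion (WM A)) = pdist x y :=
    Completion.dist_eq x y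
  have key : ∀ u v : WM A, (u : Completion (WM A)) ∈ K →
      (v : Completion (WM A)) ∉ K → Metric.infDist x₀ Kᶜ ≤ pdist u v := by
    intro u v hu hv
    have h1 : Metric.infDist x₀ Kᶜ ≤ Metric.infDist (u : Completion (WM A)) Kᶜ := hmin hu
    have h2 : Metric.infDist (u : Completion (WM A)) Kᶜ ≤
        dist (u : Completion (WM A)) (v : Completion (WM A)) :=
      Metric.infDist_le_dist_of_mem hv
    rw [Completion.dist_eq] at h2
    exact h1.trans h2
  constructor
  · intro hx
    by_contra hy
    exact absurd hxy (not_lt.mpr (key x y hx hy))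
  · intro hy
    by_contra hx
    have := key y x hy hx
    rw [pdist_comm] at this
    exact absurd hxy (not_lt.mpr this)

open UniformSpace in
/-- A language of well-matched words is a VPL iff its closure in the completion is
clopen; `L ↦ closure L` and `K ↦ K ∩ WM(A)` are mutually inverse isomorphisms of
Boolean algebras between VPLs and clopen sets. -/
theorem statement17 {A : Type} [VPAlphabet A] [Finite A] :
    (∀ L : Set (WM A), IsVPL L ↔
      IsClopen (closure ((fun w : WM A => (w : Completion (WM A))) '' L))) ∧
    (∀ L : Set (WM A), IsVPL L →
      (fun w : WM A => (w : Completion (WM A))) ⁻¹'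
        closure ((fun w : WM A => (w : Completion (WM A))) '' L) = L) ∧
    (∀ K : Set (Completion (WM A)), IsClopen K →
      closure ((fun w : WM A => (w : Completion (WM A))) ''
        ((fun w : WM A => (w : Completion (WM A))) ⁻¹' K)) = K) ∧
    (∀ K : Set (Completion (WM A)), IsClopen K →
      IsVPL ((fun w : WM A => (w : Completion (WM A))) ⁻¹' K)) ∧
    (∀ L₁ L₂ : Set (WM A), IsVPL L₁ → IsVPL L₂ →
      closure ((fun w : WM A => (w : Completion (WM A))) '' (L₁ ∪ L₂)) =
        closure ((fun w : WM A => (w : Completion (WM A))) '' L₁) ∪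
          closure ((fun w : WM A => (w : Completion (WM A))) '' L₂)) ∧
    (∀ L : Set (WM A), IsVPL L →
      closure ((fun w : WM A => (w : Completion (WM A))) '' Lᶜ) =
        (closure ((fun w : WM A => (w : Completion (WM A))) '' L))ᶜ) := by
  classical
  have hfun : (fun w : WM A => (w : Completion (WM A))) =
      ((↑) : WM A → Completion (WM A)) := rfl
  have hdense : DenseRange ((↑) : WM A → Completion (WM A)) :=
    Completion.denseRange_coe
  have hPre : ∀ L : Set (WM A),
      ((↑) : WM A → Completion (WM A)) ⁻¹'
        closure (((↑) : WM A → Completion (WM A)) '' L) = L :=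
    preimage_closure_image
  have hBwd : ∀ K : Set (Completion (WM A)), IsClopen K →
      IsVPL (((↑) : WM A → Completion (WM A)) ⁻¹' K) := by
    intro K hK
    obtain ⟨ε, hε, hsat⟩ := clopen_sat hK
    exact sat_isVPL hε hsat
  have hFwd : ∀ L : Set (WM A), IsVPL L →
      IsClopen (closure (((↑) : WM A → Completion (WM A)) '' L)) ∧
        closure (((↑) : WM A → Completion (WM A)) '' Lᶜ) =
          (closure (((↑) : WM A → Completion (WM A)) '' L))ᶜ := by
    intro L hL
    obtain ⟨ε, hε, hsat⟩ := isVPL_sat hL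
    exact sat_closure hε hsat
  rw [hfun]
  refine ⟨?_, ?_, ?_, ?_, ?_, ?_⟩
  · intro L
    constructor
    · intro h
      exact (hFwd L h).1
    · intro h
      have := hBwd _ h
      rwa [hPre L] at this
  · intro L _
    exact hPre L
  · intro K hK
    rw [Set.image_preimage_eq_inter_range]
    apply Set.Subset.antisymm
    · calc closure (K ∩ Set.range ((↑) : WM A → Completion (WM A)))
          ⊆ closure K := closure_mono Set.inter_subset_left
        _ = K := hK.isClosed.closure_eq
    · exact Dense.open_subset_closure_inter hdense hK.isOpen
  · exact hBwd
  · intro L₁ L₂ _ _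
    rw [Set.image_union, closure_union]
  · intro L hL
    exact (hFwd L hL).2
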